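/- Let V ⊆ ℝ^n be a regular space and x ∈ V. Then x is integral (all components are integers) if and only if x is a finite sum of primitive vectors of V, each conforming to x. -/

import Mathlib

open Finset

variable {n : ℕ}

/-- The support of a vector. -/
def supp (x : Fin n → ℝ) : Set (Fin n) := {j | x j ≠ 0}

/-- A nonzero vector of `V` is elementary if no nonzero vector of `V` has support
properly contained in its support. -/
def IsElementary (V : Submodule ℝ (Fin n → ℝ)) (x : Fin n → ℝ) : Prop :=
  x ∈ V ∧ x ≠ 0 ∧ ∀ y ∈ V, y ≠ 0 → ¬ (supp y ⊂ supp x)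

/-- A primitive vector: elementary with entries in `{-1, 0, 1}`. -/
def IsPrimitive (V : Submodule ℝ (Fin n → ℝ)) (x : Fin n → ℝ) : Prop :=
  IsElementary V x ∧ ∀ j, x j ∈ ({-1, 0, 1} : Set ℝ)

/-- `y` conforms to `x`. -/
def Conforms (y x : Fin n → ℝ) : Prop := ∀ j, y j ≠ 0 → y j * x j > 0

/-- A regular space: the kernel of a totally unimodular matrix. -/
def IsRegularSpace (V : Submodule ℝ (Fin n → ℝ)) : Prop :=
  ∃ (m : ℕ) (A : Matrix (Fin m) (Fin n) ℝ),
    A.IsTotallyUnimodular ∧ V = LinearMap.ker A.mulVecLin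

/-- An `r`-path: a primitive vector with value `+1` at `r`. -/
def IsRPath (V : Submodule ℝ (Fin n → ℝ)) (r : Fin n) (P : Fin n → ℝ) : Prop :=
  IsPrimitive V P ∧ P r = 1

/-- Feasibility with respect to capacity `c` (no constraint at `r`). -/
def Feasible (c : Fin n → ℝ) (r : Fin n) (f : Fin n → ℝ) : Prop :=
  ∀ j, j ≠ r → 0 ≤ f j ∧ f j ≤ c j

/-- An `r`-path `P` is augmenting for the flow `f`. -/
def Augmenting (V : Submodule ℝ (Fin n → ℝ)) (c : Fin n → ℝ) (r : Fin n)
    (f P : Fin n → ℝ) : Prop :=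
  IsRPath V r P ∧ ∃ ε : ℝ, 0 < ε ∧ Feasible c r (f + ε • P)

/-- The 1-norm. -/
def onorm (x : Fin n → ℝ) : ℝ := ∑ j, |x j|

/-- A shortest augmenting `r`-path. -/
def ShortestAug (V : Submodule ℝ (Fin n → ℝ)) (c : Fin n → ℝ) (r : Fin n)
    (f P : Fin n → ℝ) : Prop :=
  Augmenting V c r f P ∧ ∀ Q, Augmenting V c r f Q → onorm P ≤ onorm Q

/-- `g` is obtained from `f` by maximal augmentation along `P`. -/
def MaxAug (c : Fin n → ℝ) (r : Fin n) (f P g : Fin n → ℝ) : Prop :=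
  ∃ ε : ℝ, 0 < ε ∧ g = f + ε • P ∧ Feasible c r g ∧
    ∀ ε' : ℝ, ε < ε' → ¬ Feasible c r (f + ε' • P)

/-- A conformal primitive decomposition of `P + Q` in which `M` and `J` are the two
`r`-path summands (`M` playing the role of `P ∧ Q` and `J` of `P ∨ Q`). -/
def MeetJoinDecomp (V : Submodule ℝ (Fin n → ℝ)) (r : Fin n)
    (P Q M J : Fin n → ℝ) : Prop :=
  ∃ (k : ℕ) (p : Fin k → Fin n → ℝ) (a b : Fin k),
    (∀ i, IsPrimitive V (p i)) ∧ (∀ i, Conforms (p i) (P + Q)) ∧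
    (∑ i, p i) = P + Q ∧ a ≠ b ∧ p a = M ∧ p b = J ∧
    p a r = 1 ∧ p b r = 1 ∧ ∀ i, p i r = 1 → i = a ∨ i = b

open Matrix Module in
lemma rowselect {m d : ℕ} (B : Matrix (Fin m) (Fin d) ℝ)
    (h : LinearIndependent ℝ Bᵀ) : ∃ f : Fin d → Fin m, IsUnit (B.submatrix f id) := by
  classical
  have hrk : B.rank = d := by
    rw [rank_eq_finrank_span_cols, finrank_span_eq_card (show LinearIndependent ℝ B.col from h), Fintype.card_fin]
  have hrow : finrank ℝ (Submodule.span ℝ (Set.range B)) = d := by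
    change finrank ℝ (Submodule.span ℝ (Set.range B.row)) = d
    rw [← rank_eq_finrank_span_row, ← rank_transpose, rank_transpose, hrk]
  obtain ⟨b, hbsub, hbspan, hbli⟩ := exists_linearIndependent ℝ (Set.range B)
  have hbfin : b.Finite := (Set.finite_range B).subset hbsub
  haveI := hbfin.fintype
  have hcard : Fintype.card b = d := by
    have := finrank_span_eq_card (b := ((↑) : b → (Fin d → ℝ))) hbli
    rw [Subtype.range_coe, hbspan, hrow] at this
    exact this.symm
  let e : Fin d ≃ b := (Fintype.equivFinOfCardEq hcard).symm
  have hchoice : ∀ i : Fin d, ∃ r : Fin m, B r = (e i : Fin d → ℝ) := by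
    intro i
    exact hbsub (e i).2
  choose f hf using hchoice
  refine ⟨f, ?_⟩
  rw [← Matrix.linearIndependent_rows_iff_isUnit]
  have : (fun i => (B.submatrix f id) i) = ((↑) : b → (Fin d → ℝ)) ∘ e := by
    funext i
    ext j
    exact congrFun (hf i) j
  change LinearIndependent ℝ (fun i => (B.submatrix f id) i)
  rw [this]
  exact hbli.comp e e.injective

open Matrix in
lemma elementary_ratio {n m : ℕ} {A : Matrix (Fin m) (Fin n) ℝ} (hA : A.IsTotallyUnimodular)
    {e : Fin n → ℝ} (he : A.mulVec e = 0)
    (helem : ∀ w : Fin n → ℝ, A.mulVec w = 0 → w ≠ 0 → ¬ (supp w ⊂ supp e))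
    {s : Fin n} (hs : e s ≠ 0) (j : Fin n) :
    ∃ c ∈ ({-1, 0, 1} : Set ℝ), e j = c * e s := by
  classical
  by_cases hj0 : e j = 0
  · exact ⟨0, by simp, by simp [hj0]⟩
  by_cases hjs : j = s
  · exact ⟨1, by simp, by simp [hjs]⟩
  set S : Finset (Fin n) := Finset.univ.filter (fun t => e t ≠ 0) with hS
  have hjS : j ∈ S.erase s := by
    simp [hS, Finset.mem_erase, hjs, hj0]
  set d := (S.erase s).card with hd
  set eqv : {t // t ∈ S.erase s} ≃ Fin d := (S.erase s).equivFin with heqv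
  set g : Fin d → Fin n := fun i => ↑(eqv.symm i) with hgdef
  have hgmem : ∀ i, g i ∈ S.erase s := fun i => (eqv.symm i).2
  have hge : ∀ i, e (g i) ≠ 0 := by
    intro i
    have := hgmem i
    simp [hS, Finset.mem_erase] at this
    exact this.2
  have hgs : ∀ i, g i ≠ s := by
    intro i
    have := hgmem i
    exact (Finset.mem_erase.mp this).1
  have hgj : ∀ t (ht : t ∈ S.erase s), g (eqv ⟨t, ht⟩) = t := by
    intro t ht
    simp [hgdef]
  -- the columns of A indexed by g are linearly independent
  set B : Matrix (Fin m) (Fin d) ℝ := A.submatrix id g with hB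
  have hli : LinearIndependent ℝ Bᵀ := by
    change LinearIndependent ℝ B.col
    rw [Fintype.linearIndependent_iff]
    intro c hc
    set w : Fin n → ℝ := fun t => if h : t ∈ S.erase s then c (eqv ⟨t, h⟩) else 0 with hw
    have hwg : ∀ i, w (g i) = c i := by
      intro i
      have hm := hgmem i
      simp only [hw, dif_pos hm]
      congr 1
      have : (⟨g i, hm⟩ : {t // t ∈ S.erase s}) = eqv.symm i := by
        apply Subtype.ext; rfl
      rw [this, Equiv.apply_symm_apply]
    have hAw : A.mulVec w = 0 := by
      funext r
      have hsum : ∑ t : Fin n, A r t * w t = ∑ t ∈ S.erase s, A r t * w t := by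
        apply (Finset.sum_subset (Finset.subset_univ _) _).symm
        intro t _ ht
        have : w t = 0 := by rw [hw]; exact dif_neg ht
        simp [this]
      have hre : ∑ t ∈ S.erase s, A r t * w t = ∑ i : Fin d, A r (g i) * w (g i) := by
        rw [← Finset.sum_coe_sort (S.erase s) (fun t => A r t * w t),
          ← Equiv.sum_comp eqv.symm (fun t : {t // t ∈ S.erase s} => A r ↑t * w ↑t)]
      have hc' := congrFun hc r
      simp only [Finset.sum_apply, Pi.smul_apply, Pi.zero_apply, smul_eq_mul] at hc'
      have : ∑ i : Fin d, A r (g i) * w (g i) = 0 := by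
        rw [← hc']
        apply Finset.sum_congr rfl
        intro i _
        rw [hwg i]
        simp [hB, Matrix.transpose_apply, Matrix.submatrix_apply]
        ring
      show ∑ t : Fin n, A r t * w t = 0
      rw [hsum, hre, this]
    have hw0 : w = 0 := by
      by_contra hne
      apply helem w hAw hne
      constructor
      · intro t ht
        simp only [supp, Set.mem_setOf_eq] at ht ⊢
        by_cases h : t ∈ S.erase s
        · exact (Finset.mem_filter.mp (Finset.mem_erase.mp h).2).2
        · simp only [hw, dif_neg h] at ht
          exact absurd rfl ht
      · intro hcon
        have h1 : s ∈ supp e := hs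
        have h2 := hcon h1
        simp only [supp, Set.mem_setOf_eq] at h2
        simp only [hw, dif_neg (Finset.notMem_erase s S)] at h2
        exact h2 rfl
    intro i
    rw [← hwg i, hw0]
    rfl
  obtain ⟨f, hfunit⟩ := rowselect B hli
  have hMeq : B.submatrix f id = A.submatrix f g := by
    rw [hB, Matrix.submatrix_submatrix]
    rfl
  set M : Matrix (Fin d) (Fin d) ℝ := A.submatrix f g with hM
  rw [hMeq] at hfunit
  have hdetunit : IsUnit M.det := (Matrix.isUnit_iff_isUnit_det M).mp hfunit
  have hdet_ne : M.det ≠ 0 := by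
    intro h; rw [h] at hdetunit; exact not_isUnit_zero hdetunit
  have hdet_pm : M.det = 1 ∨ M.det = -1 := by
    obtain ⟨sg, hsg⟩ := (Matrix.isTotallyUnimodular_iff A).mp hA d f g
    rw [hM]
    cases sg with
    | zero => exfalso; apply hdet_ne; rw [hM, ← hsg]; rfl
    | pos => left; rw [← hsg]; rfl
    | neg => right; rw [← hsg]; rfl
  -- set up the linear system
  set u : Fin d → ℝ := fun i => e (g i) with hu
  set v : Fin d → ℝ := fun r => -(e s) * A (f r) s with hv
  have hMu : M.mulVec u = v := by
    funext r
    have h0 : ∑ t : Fin n, A (f r) t * e t = 0 := congrFun he (f r)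
    have hsum : ∑ t : Fin n, A (f r) t * e t = ∑ t ∈ S, A (f r) t * e t := by
      apply (Finset.sum_subset (Finset.subset_univ _) _).symm
      intro t _ ht
      have : e t = 0 := by
        by_contra h
        exact ht (Finset.mem_filter.mpr ⟨Finset.mem_univ t, h⟩)
      simp [this]
    have hsS : s ∈ S := Finset.mem_filter.mpr ⟨Finset.mem_univ s, hs⟩
    have hsplit : ∑ t ∈ S.erase s, A (f r) t * e t + A (f r) s * e s
        = ∑ t ∈ S, A (f r) t * e t := Finset.sum_erase_add S _ hsS
    have hre : ∑ t ∈ S.erase s, A (f r) t * e t = ∑ i : Fin d, A (f r) (g i) * e (g i) := by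
      rw [← Finset.sum_coe_sort (S.erase s) (fun t => A (f r) t * e t),
        ← Equiv.sum_comp eqv.symm (fun t : {t // t ∈ S.erase s} => A (f r) ↑t * e ↑t)]
    have : (M.mulVec u) r = ∑ i : Fin d, A (f r) (g i) * e (g i) := by
      simp [Matrix.mulVec, dotProduct, hM, hu, Matrix.submatrix_apply]
    rw [this, ← hre]
    have : ∑ t ∈ S.erase s, A (f r) t * e t = -(A (f r) s * e s) := by
      have := hsplit.trans (hsum.symm.trans h0)
      linarith
    rw [this, hv]
    ring
  -- Cramer: u = det⁻¹ • cramer M v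
  have hinj : Function.Injective M.mulVec :=
    Matrix.mulVec_injective_iff_isUnit.mpr hfunit
  have hcram : M.mulVec (Matrix.cramer M v) = M.det • v := Matrix.mulVec_cramer M v
  have hueq : Matrix.cramer M v = M.det • u := by
    apply hinj
    rw [hcram, Matrix.mulVec_smul, hMu]
  -- compute cramer at the index of j
  set i : Fin d := eqv ⟨j, hjS⟩ with hi
  have hgi : g i = j := hgj j hjS
  have hcrami : Matrix.cramer M v i
      = -(e s) * (A.submatrix f (Function.update g i s)).det := by
    rw [Matrix.cramer_apply]
    have hvs : v = (-(e s)) • (fun r => A (f r) s) := by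
      funext r; simp [hv]
    rw [hvs, Matrix.det_updateCol_smul]
    have hmm : M.updateCol i (fun r => A (f r) s) = A.submatrix f (Function.update g i s) := by
      ext r t
      rw [Matrix.updateCol_apply]
      by_cases h : t = i
      · simp [h, Function.update_apply, Matrix.submatrix_apply]
      · simp [h, Function.update_apply, Matrix.submatrix_apply, hM]
    rw [hmm]
  obtain ⟨sg2, hsg2⟩ := (Matrix.isTotallyUnimodular_iff A).mp hA d f (Function.update g i s)
  have hcval : (A.submatrix f (Function.update g i s)).det = -1 ∨
      (A.submatrix f (Function.update g i s)).det = 0 ∨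
      (A.submatrix f (Function.update g i s)).det = 1 := by
    cases sg2 with
    | zero => right; left; rw [← hsg2]; rfl
    | pos => right; right; rw [← hsg2]; rfl
    | neg => left; rw [← hsg2]; rfl
  -- conclude
  have hui : u i = e j := by rw [hu]; simp [hgi]
  have hcomp : M.det * e j = -(e s) * (A.submatrix f (Function.update g i s)).det := by
    have h3 := congrFun hueq i
    simp only [Pi.smul_apply, smul_eq_mul] at h3
    rw [hcrami, hui] at h3
    exact h3.symm
  rcases hdet_pm with h1 | h1 <;> rcases hcval with h2 | h2 | h2 <;> rw [h1, h2] at hcomp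
  · exact ⟨1, by simp, by linarith⟩
  · exact ⟨0, by simp, by linarith⟩
  · exact ⟨-1, by simp, by linarith⟩
  · exact ⟨-1, by simp, by linarith⟩
  · exact ⟨0, by simp, by linarith⟩
  · exact ⟨1, by simp, by linarith⟩

lemma chainpos {a b c : ℝ} (h1 : 0 < a * b) (h2 : 0 < b * c) : 0 < a * c := by
  nlinarith [mul_pos h1 h2, sq_nonneg b]

lemma exists_elementary_conforming {n : ℕ} (V : Submodule ℝ (Fin n → ℝ)) (x : Fin n → ℝ)
    (hx : x ∈ V) (hx0 : x ≠ 0) :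
    ∃ y, IsElementary V y ∧ (∀ j, 0 ≤ y j * x j) ∧ (∀ j, x j = 0 → y j = 0) := by
  classical
  set P : (Fin n → ℝ) → Prop :=
    fun y => y ∈ V ∧ y ≠ 0 ∧ (∀ j, 0 ≤ y j * x j) ∧ (∀ j, x j = 0 → y j = 0) with hP
  set μ : (Fin n → ℝ) → ℕ := fun y => (Finset.univ.filter (fun j => y j ≠ 0)).card with hμ
  have hPx : P x := ⟨hx, hx0, fun j => mul_self_nonneg _, fun j h => h⟩
  set K : Set ℕ := {k | ∃ y, P y ∧ μ y = k} with hK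
  have hKne : K.Nonempty := ⟨μ x, x, hPx, rfl⟩
  obtain ⟨y, hPy, hμy⟩ := Nat.sInf_mem hKne
  have hmin : ∀ z, P z → sInf K ≤ μ z := fun z hz => Nat.sInf_le ⟨z, hz, rfl⟩
  refine ⟨y, ⟨hPy.1, hPy.2.1, ?_⟩, hPy.2.2.1, hPy.2.2.2⟩
  intro z hzV hz0 hss
  -- setup
  have hsub : ∀ j, z j ≠ 0 → y j ≠ 0 := fun j h => hss.1 h
  obtain ⟨j0, hj0⟩ := Function.ne_iff.mp hz0
  simp only [Pi.zero_apply] at hj0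
  have hyj0 : y j0 ≠ 0 := hsub j0 hj0
  set z' : Fin n → ℝ := if 0 < z j0 * y j0 then z else -z with hz'
  have hz'V : z' ∈ V := by
    rw [hz']; split
    · exact hzV
    · exact V.neg_mem hzV
  have hz'supp : ∀ j, z' j = 0 ↔ z j = 0 := by
    intro j; rw [hz']; split <;> simp
  have hz'j0 : 0 < z' j0 * y j0 := by
    rw [hz']
    rcases lt_or_gt_of_ne (mul_ne_zero hj0 hyj0) with h | h
    · rw [if_neg (by linarith)]; simp; nlinarith
    · rw [if_pos h]; exact h
  set T : Finset (Fin n) := Finset.univ.filter (fun j => 0 < z' j * y j) with hT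
  have hj0T : j0 ∈ T := Finset.mem_filter.mpr ⟨Finset.mem_univ _, hz'j0⟩
  obtain ⟨js, hjsT, hjsmin⟩ := Finset.exists_min_image T (fun j => y j / z' j) ⟨j0, hj0T⟩
  have hjs' : 0 < z' js * y js := (Finset.mem_filter.mp hjsT).2
  have hz'js : z' js ≠ 0 := fun h => by simp [h] at hjs'
  set t : ℝ := y js / z' js with htdef
  have ht : 0 < t := by
    rw [htdef]
    rcases mul_pos_iff.mp hjs' with ⟨h1, h2⟩ | ⟨h1, h2⟩
    · exact div_pos h2 h1
    · exact div_pos_of_neg_of_neg h2 h1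
  set y' : Fin n → ℝ := y - t • z' with hy'
  have hy'V : y' ∈ V := V.sub_mem hPy.1 (V.smul_mem t hz'V)
  have key1 : ∀ j, y j = 0 → z' j = 0 := by
    intro j h
    by_contra hc
    exact (hsub j ((not_iff_not.mpr (hz'supp j)).mp hc)) h
  have key5 : ∀ j, y j = 0 → y' j = 0 := by
    intro j h
    rw [hy']; simp [h, key1 j h]
  have key4 : y' js = 0 := by
    rw [hy']; simp [htdef]
    field_simp
    ring
  have key2 : ∀ j, 0 ≤ y' j * y j := by
    intro j
    by_cases hzj : z' j = 0
    · rw [hy']; simp [hzj]; exact mul_self_nonneg _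
    by_cases hjT : 0 < z' j * y j
    · have hle : t ≤ y j / z' j := hjsmin j (Finset.mem_filter.mpr ⟨Finset.mem_univ _, hjT⟩)
      have h1 : t * (z' j * y j) ≤ (y j / z' j) * (z' j * y j) :=
        mul_le_mul_of_nonneg_right hle (le_of_lt hjT)
      have h2 : (y j / z' j) * (z' j * y j) = y j * y j := by field_simp
      have h3 : y' j * y j = y j * y j - t * (z' j * y j) := by rw [hy']; simp; ring
      linarith
    · have hyj : y j ≠ 0 := hsub j ((not_iff_not.mpr (hz'supp j)).mp hzj)
      have hneg : z' j * y j < 0 :=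
        lt_of_le_of_ne (not_lt.mp hjT) (mul_ne_zero hzj hyj)
      have h3 : y' j * y j = y j * y j - t * (z' j * y j) := by rw [hy']; simp; ring
      nlinarith [mul_neg_of_pos_of_neg ht hneg, mul_self_nonneg (y j)]
  by_cases hy'0 : y' = 0
  · -- then y = t • z', contradicting proper inclusion of supports
    obtain ⟨j1, hj1y, hj1z⟩ := Set.not_subset.mp hss.2
    have hyj1 : y j1 ≠ 0 := hj1y
    have hzj1 : z j1 = 0 := not_not.mp hj1z
    have : y' j1 = y j1 - t * z' j1 := by rw [hy']; simp
    rw [hy'0] at this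
    simp [(hz'supp j1).mpr hzj1] at this
    exact hyj1 this.symm
  · -- y' is a strictly smaller candidate
    have hPy' : P y' := by
      refine ⟨hy'V, hy'0, ?_, ?_⟩
      · intro j
        by_cases hy'j : y' j = 0
        · simp [hy'j]
        have hyj : y j ≠ 0 := fun h => hy'j (key5 j h)
        have hyy : 0 < y' j * y j :=
          lt_of_le_of_ne (key2 j) (Ne.symm (mul_ne_zero hy'j hyj))
        by_cases hxj : x j = 0
        · simp [hxj]
        have hyx : 0 < y j * x j :=
          lt_of_le_of_ne (hPy.2.2.1 j) (Ne.symm (mul_ne_zero hyj hxj))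
        exact le_of_lt (chainpos hyy hyx)
      · intro j h
        exact key5 j (hPy.2.2.2 j h)
    have hlt : μ y' < μ y := by
      apply Finset.card_lt_card
      constructor
      · intro j hj
        simp only [Finset.mem_filter, Finset.mem_univ, true_and] at hj ⊢
        intro h
        exact hj (key5 j h)
      · intro hcon
        have hyjs : y js ≠ 0 := by
          intro h; rw [h] at hjs'; simp at hjs'
        have := hcon (Finset.mem_filter.mpr ⟨Finset.mem_univ _, hyjs⟩)
        simp only [Finset.mem_filter, Finset.mem_univ, true_and] at this
        exact this key4
    have := hmin y' hPy'
    omega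


lemma exists_primitive_conforming (V : Submodule ℝ (Fin n → ℝ))
    (hV : IsRegularSpace V) (x : Fin n → ℝ) (hx : x ∈ V) (hx0 : x ≠ 0) :
    ∃ p, IsPrimitive V p ∧ Conforms p x ∧ (∀ j, x j = 0 → p j = 0) := by
  obtain ⟨m, A, hA, hVA⟩ := hV
  obtain ⟨y, hyel, hycon, hysupp⟩ := exists_elementary_conforming V x hx hx0
  obtain ⟨s, hs⟩ := Function.ne_iff.mp hyel.2.1
  have hs : y s ≠ 0 := by simpa using hs
  have hmem : ∀ w : Fin n → ℝ, w ∈ V ↔ A.mulVec w = 0 := by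
    intro w
    rw [hVA, LinearMap.mem_ker, Matrix.mulVecLin_apply]
  have hratio := fun j => elementary_ratio hA ((hmem y).mp hyel.1)
      (fun w hw hw0 => hyel.2.2 w ((hmem w).mpr hw) hw0) hs j
  set p : Fin n → ℝ := fun j => y j / |y s| with hp
  have habs : (0:ℝ) < |y s| := abs_pos.mpr hs
  have hpV : p ∈ V := by
    have : p = |y s|⁻¹ • y := by funext j; simp [hp, div_eq_inv_mul]
    rw [this]
    exact V.smul_mem _ hyel.1
  have hpz : ∀ j, p j = 0 ↔ y j = 0 := by
    intro j
    rw [hp]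
    simp [div_eq_zero_iff, habs.ne']
  have hps : p s ≠ 0 := fun h => hs ((hpz s).mp h)
  have hpne : p ≠ 0 := fun h => hps (by rw [h]; rfl)
  have hsupp_eq : supp p = supp y := by
    ext j
    simp only [supp, Set.mem_setOf_eq, not_iff_not.mpr (hpz j)]
  have hsign : y s / |y s| = 1 ∨ y s / |y s| = -1 := by
    rcases lt_or_gt_of_ne hs with h | h
    · right; rw [abs_of_neg h]; field_simp
    · left; rw [abs_of_pos h]; field_simp
  refine ⟨p, ⟨⟨hpV, hpne, ?_⟩, ?_⟩, ?_, ?_⟩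
  · intro w hwV hw0 hws
    rw [hsupp_eq] at hws
    exact hyel.2.2 w hwV hw0 hws
  · intro j
    obtain ⟨c, hc, hcy⟩ := hratio j
    have hpj : p j = c * (y s / |y s|) := by
      rw [hp]; simp only []
      rw [hcy, mul_div_assoc]
    simp only [Set.mem_insert_iff, Set.mem_singleton_iff] at hc ⊢
    rcases hc with h | h | h <;> rcases hsign with h2 | h2 <;>
      rw [hpj, h, h2] <;> norm_num
  · intro j hpj
    have hyj : y j ≠ 0 := fun h => hpj ((hpz j).mpr h)
    have hxj : x j ≠ 0 := fun h => hyj (hysupp j h)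
    have hyx : 0 < y j * x j :=
      lt_of_le_of_ne (hycon j) (Ne.symm (mul_ne_zero hyj hxj))
    have : p j * x j = (y j * x j) / |y s| := by rw [hp]; ring
    rw [this]
    positivity
  · intro j hxj
    exact (hpz j).mpr (hysupp j hxj)

lemma decomp_aux (V : Submodule ℝ (Fin n → ℝ)) (hV : IsRegularSpace V) :
    ∀ N (ζ : Fin n → ℤ), (∑ j, (ζ j).natAbs) ≤ N → (fun j => ((ζ j : ℤ) : ℝ)) ∈ V →
    ∃ (k : ℕ) (p : Fin k → Fin n → ℝ), (∀ i, IsPrimitive V (p i)) ∧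
      (∀ i, Conforms (p i) (fun j => ((ζ j : ℤ) : ℝ))) ∧
      (∑ i, p i) = (fun j => ((ζ j : ℤ) : ℝ)) := by
  intro N
  induction N with
  | zero =>
    intro ζ hsum hmem
    have hz : ∀ j, ζ j = 0 := by
      intro j
      have h := Finset.single_le_sum (f := fun j => (ζ j).natAbs)
        (fun i _ => Nat.zero_le _) (Finset.mem_univ j)
      have h2 : (ζ j).natAbs ≤ ∑ x : Fin n, (ζ x).natAbs := by simpa using h
      omega
    refine ⟨0, Fin.elim0, fun i => i.elim0, fun i => i.elim0, ?_⟩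
    funext j
    simp [hz j]
  | succ N ih =>
    intro ζ hsum hmem
    by_cases h0 : ∀ j, ζ j = 0
    · refine ⟨0, Fin.elim0, fun i => i.elim0, fun i => i.elim0, ?_⟩
      funext j
      simp [h0 j]
    · push_neg at h0
      obtain ⟨j0, hj0⟩ := h0
      set x : Fin n → ℝ := fun j => ((ζ j : ℤ) : ℝ) with hxdef
      have hxne : x ≠ 0 := by
        intro h
        apply hj0
        have := congrFun h j0
        simpa [hxdef] using this
      obtain ⟨p, hprim, hcon, hsupp⟩ := exists_primitive_conforming V hV x hmem hxne
      classical
      set η : Fin n → ℤ := fun j => if p j = 1 then 1 else if p j = -1 then -1 else 0 with hη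
      have hηcast : ∀ j, ((η j : ℤ) : ℝ) = p j := by
        intro j
        have := hprim.2 j
        simp only [Set.mem_insert_iff, Set.mem_singleton_iff] at this
        rcases this with h | h | h <;> norm_num [hη, h]
      set ζ' : Fin n → ℤ := fun j => ζ j - η j with hζ'
      have hx' : (fun j => ((ζ' j : ℤ) : ℝ)) = x - p := by
        funext j
        simp only [hζ', hxdef, Pi.sub_apply]
        push_cast
        rw [hηcast j]
      have hfacts : ∀ j, (ζ' j).natAbs ≤ (ζ j).natAbs ∧
          (p j ≠ 0 → (ζ' j).natAbs < (ζ j).natAbs) := by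
        intro j
        have := hprim.2 j
        simp only [Set.mem_insert_iff, Set.mem_singleton_iff] at this
        rcases this with h | h | h
        · have hxj : p j * x j > 0 := hcon j (by rw [h]; norm_num)
          rw [h] at hxj
          have hneg : x j < 0 := by nlinarith
          have hζj : ζ j ≤ -1 := by
            have := Int.cast_lt_zero.mp (show ((ζ j : ℤ) : ℝ) < 0 from hneg)
            omega
          have hη' : η j = -1 := by norm_num [hη, h]
          constructor
          · simp only [hζ', hη']; omega
          · intro _; simp only [hζ', hη']; omega
        · have hη' : η j = 0 := by norm_num [hη, h]
          constructor
          · simp only [hζ', hη']; omega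
          · intro hc; exact absurd h hc
        · have hxj : p j * x j > 0 := hcon j (by rw [h]; norm_num)
          rw [h] at hxj
          have hpos : 0 < x j := by nlinarith
          have hζj : 1 ≤ ζ j := by
            have := Int.cast_pos.mp (show (0:ℝ) < ((ζ j : ℤ) : ℝ) from hpos)
            omega
          have hη' : η j = 1 := by norm_num [hη, h]
          constructor
          · simp only [hζ', hη']; omega
          · intro _; simp only [hζ', hη']; omega
      obtain ⟨s, hps⟩ := Function.ne_iff.mp hprim.1.2.1
      have hps : p s ≠ 0 := by simpa using hps
      have hstrict : ∑ j, (ζ' j).natAbs < ∑ j, (ζ j).natAbs := by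
        apply Finset.sum_lt_sum
        · intro i _; exact (hfacts i).1
        · exact ⟨s, Finset.mem_univ s, (hfacts s).2 hps⟩
      have hsum' : ∑ j, (ζ' j).natAbs ≤ N := by omega
      have hmem' : (fun j => ((ζ' j : ℤ) : ℝ)) ∈ V := by
        rw [hx']
        exact V.sub_mem hmem hprim.1.1
      obtain ⟨k, q, hq1, hq2, hq3⟩ := ih ζ' hsum' hmem'
      rw [hx'] at hq2 hq3
      -- weak conformity of x - p to x
      have hwk : ∀ j, x j - p j ≠ 0 → (x j - p j) * x j > 0 := by
        intro j hne
        have := hprim.2 j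
        simp only [Set.mem_insert_iff, Set.mem_singleton_iff] at this
        rcases this with h | h | h
        · have hxj : p j * x j > 0 := hcon j (by rw [h]; norm_num)
          rw [h] at hxj hne ⊢
          have hx1 : x j < 0 := by nlinarith
          have hζj : ζ j ≤ -1 := by
            have := Int.cast_lt_zero.mp (show ((ζ j : ℤ) : ℝ) < 0 from hx1)
            omega
          have hle : x j ≤ -1 := by
            have : ((ζ j : ℤ) : ℝ) ≤ ((-1 : ℤ) : ℝ) := Int.cast_le.mpr hζj
            simpa [hxdef] using this
          have h3 : x j - (-1) < 0 := lt_of_le_of_ne (by linarith) hne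
          nlinarith
        · rw [h] at hne ⊢
          rw [sub_zero] at hne ⊢
          exact mul_self_pos.mpr hne
        · have hxj : p j * x j > 0 := hcon j (by rw [h]; norm_num)
          rw [h] at hxj hne ⊢
          have hx1 : 0 < x j := by nlinarith
          have hζj : 1 ≤ ζ j := by
            have := Int.cast_pos.mp (show (0:ℝ) < ((ζ j : ℤ) : ℝ) from hx1)
            omega
          have hle : 1 ≤ x j := by
            have : ((1 : ℤ) : ℝ) ≤ ((ζ j : ℤ) : ℝ) := Int.cast_le.mpr hζj
            simpa [hxdef] using this
          have h3 : 0 < x j - 1 := lt_of_le_of_ne (by linarith) (Ne.symm hne)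
          nlinarith
      refine ⟨k + 1, Fin.cons p q, ?_, ?_, ?_⟩
      · intro i
        refine Fin.cases ?_ ?_ i
        · simpa [Fin.cons_zero] using hprim
        · intro i'; simpa [Fin.cons_succ] using hq1 i'
      · intro i
        refine Fin.cases ?_ ?_ i
        · simpa [Fin.cons_zero] using hcon
        · intro i' j hne
          simp only [Fin.cons_succ] at hne ⊢
          have h1 := hq2 i' j hne
          rw [Pi.sub_apply] at h1
          have hb : x j - p j ≠ 0 := by
            intro h; rw [h] at h1; simp at h1
          exact chainpos h1 (hwk j hb)
      · rw [Fin.sum_cons, hq3]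
        funext j
        simp [hxdef]

theorem stmt3 (V : Submodule ℝ (Fin n → ℝ)) (hV : IsRegularSpace V)
    (x : Fin n → ℝ) (hx : x ∈ V) :
    (∀ j, ∃ z : ℤ, x j = (z : ℝ)) ↔
      ∃ (k : ℕ) (p : Fin k → Fin n → ℝ),
        (∀ i, IsPrimitive V (p i)) ∧ (∀ i, Conforms (p i) x) ∧ (∑ i, p i) = x := by
  constructor
  · intro h
    choose ζ hζ using h
    have hxe : x = fun j => ((ζ j : ℤ) : ℝ) := funext hζ
    obtain ⟨k, p, h1, h2, h3⟩ := decomp_aux V hV (∑ j, (ζ j).natAbs) ζ le_rfl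
      (by rw [← hxe]; exact hx)
    rw [← hxe] at h2 h3
    exact ⟨k, p, h1, h2, h3⟩
  · rintro ⟨k, p, hp1, hp2, hp3⟩ j
    classical
    refine ⟨∑ i, if p i j = 1 then (1:ℤ) else if p i j = -1 then -1 else 0, ?_⟩
    have hxj : x j = ∑ i, p i j := by
      rw [← hp3]
      simp [Finset.sum_apply]
    rw [hxj]
    push_cast
    apply Finset.sum_congr rfl
    intro i _
    have := (hp1 i).2 j
    simp only [Set.mem_insert_iff, Set.mem_singleton_iff] at this
    rcases this with h | h | h <;> norm_num [h]
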